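/- Let f be either f_com or f_0. The tensors A^{(i)}_{e,e'} f, ranging over all i ∈ Fin d and all pairs of edges e = (a,b), e' = (a',b') ∈ E^i with a ≠ a' and b ≠ b' (i.e. e and e' share no vertex), are linearly independent; consequently the dimension of their ℂ-linear span equals Σ_{i ∈ Fin d} w i · w (i+1) · (w i − 1) · (w (i+1) − 1). -/

import Mathlib

open scoped BigOperators

attribute [local instance] Classical.propDecidable

namespace ABP

variable {d : ℕ} [NeZero d]

/-- The set of edges in layer `i` of a (cyclic / trace) ABP of width format `w`:
an edge `(a, b)` goes from vertex `a` of layer `i` to vertex `b` of layer `i + 1`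
(layer indices modulo `d`). -/
abbrev Edge (w : Fin d → ℕ) (i : Fin d) : Type := Fin (w i) × Fin (w (i + 1))

/-- An edge tuple is a valid path if consecutive edges match (cyclically). -/
def ValidPath (w : Fin d → ℕ) (p : ∀ i : Fin d, Edge w i) : Prop :=
  ∀ i : Fin d, (p i).2 = (p (i + 1)).1

/-- An edge is parity preserving if its two endpoints have the same parity. -/
def ParityPres {w : Fin d → ℕ} {i : Fin d} (e : Edge w i) : Prop :=
  e.1.val % 2 = e.2.val % 2

/-- The number of parity-preserving edges of an edge tuple. -/
noncomputable def ppCount (w : Fin d → ℕ) (p : ∀ i : Fin d, Edge w i) : ℕ :=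
  (Finset.univ.filter fun i : Fin d => ParityPres (p i)).card

/-- The tensor `f_com`: value 1 on valid paths, 0 elsewhere. -/
noncomputable def fcom (w : Fin d → ℕ) : (∀ i : Fin d, Edge w i) → ℂ :=
  fun p => if ValidPath w p then 1 else 0

/-- The tensor `f_0`: value 1 on valid paths containing exactly one
parity-preserving edge, 0 elsewhere. -/
noncomputable def f0 (w : Fin d → ℕ) : (∀ i : Fin d, Edge w i) → ℂ :=
  fun p => if ValidPath w p ∧ ppCount w p = 1 then 1 else 0

/-- The action of a tuple of matrices `g i : E^i → E^i → ℂ` on a tensor: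
`((⊗ᵢ gᵢ) f)(p) = Σ_q (Πᵢ gᵢ (p i) (q i)) · f q`. -/
noncomputable def actT (w : Fin d → ℕ) (g : ∀ i : Fin d, Edge w i → Edge w i → ℂ)
    (f : (∀ i : Fin d, Edge w i) → ℂ) : (∀ i : Fin d, Edge w i) → ℂ :=
  fun p => ∑ q : ∀ i : Fin d, Edge w i, (∏ i : Fin d, g i (p i) (q i)) * f q

end ABP

namespace ABP

/-- The action on the `i`-th tensor factor of the elementary matrix with a single 1
in position `(e, e')`:
`(A^{(i)}_{e,e'} f)(p) = f(p with i-th entry replaced by e)` if `p i = e'`, else `0`. -/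
noncomputable def Aact {d : ℕ} [NeZero d] (w : Fin d → ℕ) (i : Fin d) (e e' : Edge w i)
    (f : (∀ i : Fin d, Edge w i) → ℂ) : (∀ i : Fin d, Edge w i) → ℂ :=
  fun p => if p i = e' then f (Function.update p i e) else 0

end ABP

namespace ABP

/-- Index type: a layer `i` together with a pair of edges of layer `i`
sharing no vertex. -/
def NoShare {d : ℕ} [NeZero d] (w : Fin d → ℕ) : Type :=
  Σ i : Fin d, {ee : Edge w i × Edge w i // ee.1.1 ≠ ee.2.1 ∧ ee.1.2 ≠ ee.2.2}

end ABP

open Fin.NatCast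

namespace ABP

variable {d : ℕ} [NeZero d]

private lemma nat_cast_val {m : ℕ} (hm : m < d) : ((m : Fin d)).val = m := by
  rw [Fin.val_natCast, Nat.mod_eq_of_lt hm]

private lemma add_cast_inj (i : Fin d) {m n : ℕ} (hm : m < d) (hn : n < d)
    (h : i + (m : Fin d) = i + (n : Fin d)) : m = n := by
  have h2 : (m : Fin d) = (n : Fin d) := add_left_cancel h
  have h3 := congrArg Fin.val h2
  rwa [nat_cast_val hm, nat_cast_val hn] at h3

private lemma exists_offset (i j : Fin d) : ∃ m : ℕ, m < d ∧ j = i + (m : Fin d) := by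
  refine ⟨(j - i).val, (j - i).isLt, ?_⟩
  rw [Fin.cast_val_eq_self]
  abel

private lemma add_cast_succ (i : Fin d) (m : ℕ) :
    i + (m : Fin d) + 1 = i + ((m + 1 : ℕ) : Fin d) := by push_cast; abel

/-- vertex choice for the canonical path -/
private noncomputable def pv (w : Fin d → ℕ) (hw : ∀ i, 2 ≤ w i) (i : Fin d)
    (a : Fin (w i)) (b : Fin (w (i + 1))) (s : ℕ) (j : Fin d) : Fin (w j) :=
  if h : j = i then Fin.cast (congrArg w h).symm a
  else if h' : j = i + 1 then Fin.cast (congrArg w h').symm b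
  else ⟨(b.val + ((j - i : Fin d)).val + s) % 2,
    lt_of_lt_of_le (Nat.mod_lt _ (by norm_num)) (hw j)⟩

lemma exists_good_path (hd3 : 3 ≤ d) (hodd : Odd d) (w : Fin d → ℕ) (hw : ∀ i, 2 ≤ w i)
    (i : Fin d) (a : Fin (w i)) (b : Fin (w (i + 1))) :
    ∃ q : ∀ j : Fin d, Edge w j, ValidPath w q ∧ q i = (a, b) ∧ ppCount w q = 1 := by
  classical
  have hd2 : d % 2 = 1 := Nat.odd_iff.mp hodd
  set s : ℕ := if a.val % 2 = b.val % 2 then 1 else 0 with hs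
  set m₀ : ℕ := if a.val % 2 = b.val % 2 then 0 else 1 with hm₀
  have hm₀d : m₀ < d := by rw [hm₀]; split <;> omega
  set v : ∀ j : Fin d, Fin (w j) := pv w hw i a b s with hv
  have hne10 : i + 1 ≠ i := by
    intro h
    have h' : i + ((1 : ℕ) : Fin d) = i + ((0 : ℕ) : Fin d) := by push_cast; simpa using h
    exact absurd (add_cast_inj i (by omega) (by omega) h') one_ne_zero
  have hvi : v i = a := by
    rw [hv]; unfold pv; rw [dif_pos rfl]; apply Fin.ext; rfl
  have hvi1 : v (i + 1) = b := by
    rw [hv]; unfold pv; rw [dif_neg hne10, dif_pos rfl]; apply Fin.ext; rfl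
  have hval : ∀ m : ℕ, m < d →
      (v (i + (m : Fin d))).val % 2 =
        if m = 0 then a.val % 2 else if m = 1 then b.val % 2 else (b.val + m + s) % 2 := by
    intro m hm
    by_cases h0 : m = 0
    · subst h0
      have h' : i + ((0 : ℕ) : Fin d) = i := by push_cast; abel
      rw [h', hvi, if_pos rfl]
    by_cases h1 : m = 1
    · subst h1
      have h' : i + ((1 : ℕ) : Fin d) = i + 1 := by push_cast; ring
      rw [h', hvi1, if_neg h0, if_pos rfl]
    · have hji : i + (m : Fin d) ≠ i := by
        intro h
        have h' : i + (m : Fin d) = i + ((0 : ℕ) : Fin d) := by push_cast; simpa using h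
        exact h0 (add_cast_inj i hm (by omega) h')
      have hji1 : i + (m : Fin d) ≠ i + 1 := by
        intro h
        have h' : i + (m : Fin d) = i + ((1 : ℕ) : Fin d) := by push_cast; simpa using h
        exact h1 (add_cast_inj i hm (by omega) h')
      have hsub : ((i + (m : Fin d)) - i) = (m : Fin d) := by abel
      rw [hv]; unfold pv
      rw [dif_neg hji, dif_neg hji1, if_neg h0, if_neg h1]
      simp only [hsub, nat_cast_val hm]
      omega
  refine ⟨fun j => (v j, v (j + 1)), fun j => rfl, by show (v i, v (i+1)) = (a, b); rw [hvi, hvi1], ?_⟩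
  have hchar : ∀ j : Fin d,
      ParityPres ((v j, v (j + 1)) : Edge w j) ↔ j = i + (m₀ : Fin d) := by
    intro j
    obtain ⟨m, hm, rfl⟩ := exists_offset i j
    have hRHS : (i + (m : Fin d) = i + (m₀ : Fin d)) ↔ m = m₀ :=
      ⟨fun h => add_cast_inj i hm hm₀d h, fun h => by rw [h]⟩
    set m' : ℕ := (m + 1) % d with hm'def
    have hm' : m' < d := Nat.mod_lt _ (by omega)
    have hcast : i + (m : Fin d) + 1 = i + (m' : Fin d) := by
      rw [add_cast_succ]
      congr 1
      apply Fin.ext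
      rw [Fin.val_natCast, Fin.val_natCast, hm'def]
      exact (Nat.mod_mod_of_dvd _ dvd_rfl).symm
    have hm'' : (m = d - 1 ∧ m' = 0) ∨ (m ≠ d - 1 ∧ m' = m + 1) := by
      by_cases hmd : m = d - 1
      · left
        refine ⟨hmd, ?_⟩
        rw [hm'def, hmd, show d - 1 + 1 = d from by omega, Nat.mod_self]
      · right
        exact ⟨hmd, by rw [hm'def, Nat.mod_eq_of_lt (by omega)]⟩
    show (v (i + (m : Fin d))).val % 2 = (v (i + (m : Fin d) + 1)).val % 2 ↔ _
    rw [hcast, hval m hm, hval m' hm', hRHS]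
    by_cases hab : a.val % 2 = b.val % 2
    · have hs' : s = 1 := by rw [hs, if_pos hab]
      have hm₀' : m₀ = 0 := by rw [hm₀, if_pos hab]
      split_ifs <;> omega
    · have hs' : s = 0 := by rw [hs, if_neg hab]
      have hm₀' : m₀ = 1 := by rw [hm₀, if_neg hab]
      split_ifs <;> omega
  unfold ppCount
  have hfilt : (Finset.univ.filter fun j : Fin d => ParityPres ((v j, v (j + 1)) : Edge w j))
      = {i + (m₀ : Fin d)} := by
    ext j
    simp only [Finset.mem_filter, Finset.mem_univ, true_and, Finset.mem_singleton]
    exact hchar j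
  rw [hfilt]
  exact Finset.card_singleton _

end ABP

namespace ABP

variable {d : ℕ} [NeZero d]

lemma key_eval (hd3 : 3 ≤ d) (hodd : Odd d) (w : Fin d → ℕ) (hw : ∀ i, 2 ≤ w i)
    (f : (∀ i : Fin d, Edge w i) → ℂ) (hf : f = fcom w ∨ f = f0 w) (x : NoShare w) :
    ∃ p : ∀ j : Fin d, Edge w j,
      ∀ y : NoShare w, Aact w y.1 y.2.val.1 y.2.val.2 f p = if y = x then 1 else 0 := by
  classical
  obtain ⟨i, ⟨⟨e, e'⟩, hx1, hx2⟩⟩ := x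
  obtain ⟨q, hqv, hqi, hqc⟩ := exists_good_path hd3 hodd w hw i e.1 e.2
  have hqi' : q i = e := hqi
  have hfq : f q = 1 := by
    rcases hf with rfl | rfl
    · simp [fcom, hqv]
    · simp [f0, hqv, hqc]
  set p := Function.update q i e' with hp
  have hne10 : i + 1 ≠ i := by
    intro h
    have h' : i + ((1 : ℕ) : Fin d) = i + ((0 : ℕ) : Fin d) := by push_cast; simpa using h
    exact absurd (add_cast_inj i (by omega) (by omega) h') one_ne_zero
  set im : Fin d := i + ((d - 1 : ℕ) : Fin d) with him_def
  have him : im + 1 = i := by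
    rw [him_def, add_cast_succ, show d - 1 + 1 = d from by omega, Fin.natCast_self, add_zero]
  have him_ne : im ≠ i := by
    intro h
    have h' : i + ((d - 1 : ℕ) : Fin d) = i + ((0 : ℕ) : Fin d) := by
      push_cast; simpa [him_def] using h
    have := add_cast_inj i (by omega) (by omega) h'
    omega
  have him_ne1 : im ≠ i + 1 := by
    intro h
    have h' : i + ((d - 1 : ℕ) : Fin d) = i + ((1 : ℕ) : Fin d) := by
      push_cast; simpa [him_def] using h
    have := add_cast_inj i (by omega) (by omega) h'
    omega
  have Hq1 : ((q im).2).val = e.1.val := by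
    have h1 := congrArg Fin.val (hqv im)
    have h2 := congrArg (fun t : Fin d => ((q t).1).val) him
    rw [h1, h2, hqi']
  have Hq2 : ((q (i + 1)).1).val = e.2.val := by
    have h1 := congrArg Fin.val (hqv i)
    rw [hqi'] at h1
    exact h1.symm
  have hpi : p i = e' := by rw [hp]; exact Function.update_self i e' q
  refine ⟨p, fun y => ?_⟩
  obtain ⟨j, ⟨⟨g, g'⟩, hy1, hy2⟩⟩ := y
  by_cases hyx : (⟨j, ⟨(g, g'), hy1, hy2⟩⟩ : NoShare w) = ⟨i, ⟨(e, e'), hx1, hx2⟩⟩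
  · refine Eq.trans ?_ (if_pos hyx).symm
    obtain ⟨h1, h2⟩ := Sigma.mk.inj_iff.mp hyx
    subst h1
    have h3 := congrArg Subtype.val (eq_of_heq h2)
    rw [Prod.mk.injEq] at h3
    obtain ⟨rfl, rfl⟩ := h3
    show (if p j = g' then f (Function.update p j g) else 0) = 1
    rw [if_pos hpi, hp, Function.update_idem]
    rw [show Function.update q j g = q from by rw [← hqi']; exact Function.update_eq_self j q]
    exact hfq
  · refine Eq.trans ?_ (if_neg hyx).symm
    show (if p j = g' then f (Function.update p j g) else 0) = 0
    by_cases hpj : p j = g'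
    swap
    · rw [if_neg hpj]
    rw [if_pos hpj]
    by_contra hne0
    set r := Function.update p j g with hr_def
    have hr : ValidPath w r := by
      rcases hf with rfl | rfl
      · by_contra hnv
        exact hne0 (by simp [fcom, hnv])
      · by_contra hnv
        exact hne0 (by simp [f0, hnv])
    have hrj : r j = g := Function.update_self j g p
    have hrm : ∀ m, m ≠ j → r m = p m := fun m hm => Function.update_of_ne hm g p
    have hji : j = i := by
      by_contra hji
      by_cases hjj : j = i + 1
      · have h1 := congrArg Fin.val (hr im)
        have h2 := congrArg (fun t : Fin d => ((r t).1).val) him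
        have h3 : r im = q im := by
          rw [hrm im (by rw [hjj]; exact him_ne1), hp]
          exact Function.update_of_ne him_ne e' q
        have h4 : r i = e' := by
          rw [hrm i fun h => hji h.symm]; exact hpi
        have hcontr : e.1.val = e'.1.val := by
          rw [← Hq1, ← h3]
          rw [h1, h2, h4]
        exact hx1 (Fin.ext hcontr)
      · have h1 := congrArg Fin.val (hr i)
        have h4 : r i = e' := by
          rw [hrm i fun h => hji h.symm]; exact hpi
        have h5 : r (i + 1) = q (i + 1) := by
          rw [hrm (i + 1) fun h => hjj h.symm, hp]
          exact Function.update_of_ne hne10 e' q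
        have hcontr : e'.2.val = e.2.val := by
          rw [← h4, h1, h5, Hq2]
        exact hx2 (Fin.ext hcontr.symm)
    subst hji
    have hri : r = Function.update q j g := by
      rw [hr_def, hp]; exact Function.update_idem e' g q
    have hg2 : g.2.val = e.2.val := by
      have h1 := congrArg Fin.val (hr j)
      have h5 : r (j + 1) = q (j + 1) := by
        rw [hri]; exact Function.update_of_ne hne10 g q
      rw [← hrj, h1, h5, Hq2]
    have hg1 : g.1.val = e.1.val := by
      have h1 := congrArg Fin.val (hr im)
      have h2 := congrArg (fun t : Fin d => ((r t).1).val) him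
      have h3 : r im = q im := by
        rw [hri]; exact Function.update_of_ne him_ne g q
      have : ((q im).2).val = (r j).1.val := by rw [← h3, h1, h2]
      rw [← hrj] at *
      rw [← this, Hq1]
    have hge : g = e := Prod.ext (Fin.ext hg1) (Fin.ext hg2)
    have hge' : g' = e' := by rw [← hpj, hpi]
    subst hge
    subst hge'
    exact hyx rfl

end ABP

namespace ABP

variable {d : ℕ} [NeZero d]

private lemma card_ne_pairs (n : ℕ) :
    Fintype.card {p : Fin n × Fin n // p.1 ≠ p.2} = n * n - n := by
  classical
  rw [Fintype.card_subtype]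
  have h : (Finset.univ.filter fun p : Fin n × Fin n => p.1 ≠ p.2)
      = (Finset.univ : Finset (Fin n)).offDiag := by
    ext p
    simp [Finset.mem_offDiag]
  rw [h, Finset.offDiag_card]
  simp

private def nsEquiv (w : Fin d → ℕ) : NoShare w ≃
    Σ i : Fin d, ({aa : Fin (w i) × Fin (w i) // aa.1 ≠ aa.2} ×
      {bb : Fin (w (i + 1)) × Fin (w (i + 1)) // bb.1 ≠ bb.2}) where
  toFun x := ⟨x.1, ⟨(x.2.val.1.1, x.2.val.2.1), x.2.prop.1⟩,
    ⟨(x.2.val.1.2, x.2.val.2.2), x.2.prop.2⟩⟩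
  invFun y := ⟨y.1, ⟨((y.2.1.val.1, y.2.2.val.1), (y.2.1.val.2, y.2.2.val.2)),
    y.2.1.prop, y.2.2.prop⟩⟩
  left_inv x := rfl
  right_inv y := rfl

noncomputable instance (w : Fin d → ℕ) : Fintype (NoShare w) := by
  unfold NoShare
  infer_instance

lemma card_noShare (w : Fin d → ℕ) :
    Fintype.card (NoShare w) =
      ∑ i : Fin d, w i * w (i + 1) * (w i - 1) * (w (i + 1) - 1) := by
  classical
  rw [Fintype.card_congr (nsEquiv w), Fintype.card_sigma]
  refine Finset.sum_congr rfl fun i _ => ?_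
  rw [Fintype.card_prod, card_ne_pairs, card_ne_pairs]
  have key : ∀ m : ℕ, m * m - m = m * (m - 1) := by
    intro m
    cases m with
    | zero => rfl
    | succ k => rw [Nat.mul_succ, Nat.add_sub_cancel, Nat.succ_sub_one]
  rw [key, key]
  ring
end ABP


/-- Let `f` be `f_com` or `f_0`. The tensors `A^{(i)}_{e,e'} f`,
over all layers `i` and pairs of edges `e, e'` of layer `i` sharing no vertex, are
linearly independent; consequently the dimension of their span equals
`Σᵢ w i · w (i+1) · (w i − 1) · (w (i+1) − 1)`. -/
theorem g2_span_dim (d : ℕ) [NeZero d] (hd3 : 3 ≤ d) (hodd : Odd d)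
    (w : Fin d → ℕ) (hw : ∀ i, 2 ≤ w i)
    (f : (∀ i : Fin d, ABP.Edge w i) → ℂ) (hf : f = ABP.fcom w ∨ f = ABP.f0 w) :
    LinearIndependent ℂ
      (fun x : ABP.NoShare w => ABP.Aact w x.1 x.2.val.1 x.2.val.2 f) ∧
    Module.finrank ℂ (Submodule.span ℂ
        (Set.range fun x : ABP.NoShare w => ABP.Aact w x.1 x.2.val.1 x.2.val.2 f)) =
      ∑ i : Fin d, w i * w (i + 1) * (w i - 1) * (w (i + 1) - 1) := by
  classical
  choose p hp using fun x => ABP.key_eval hd3 hodd w hw f hf x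
  have li : LinearIndependent ℂ
      (fun x : ABP.NoShare w => ABP.Aact w x.1 x.2.val.1 x.2.val.2 f) := by
    rw [linearIndependent_iff']
    intro t g hsum x hxt
    have h1 := congrFun hsum (p x)
    simp only [Finset.sum_apply, Pi.smul_apply, smul_eq_mul, Pi.zero_apply] at h1
    rw [Finset.sum_congr rfl (fun y _ => by rw [hp x y])] at h1
    simp only [mul_ite, mul_one, mul_zero] at h1
    rwa [Finset.sum_ite_eq' t x g, if_pos hxt] at h1
  refine ⟨li, ?_⟩
  rw [finrank_span_eq_card li, ABP.card_noShare w]
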